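/- Generic linear perturbations of a smooth function are Morse: let f : ℝⁿ → ℝ be C^∞. Then for Lebesgue-almost every a ∈ ℝⁿ, the function f_a(x) = f(x) − ⟨a, x⟩ is a Morse function, i.e., every critical point p of f_a (a point with D(f_a)_p = 0) has nondegenerate Hessian D²(f_a)_p. -/

import Mathlib

open MeasureTheory

/-- For a smooth function `f : ℝⁿ → ℝ`, almost every linear perturbation
`x ↦ f x - ⟨a, x⟩` is a Morse function: every critical point has nondegenerate
Hessian. -/
theorem generic_linear_perturbation_is_morse
    {n : ℕ} (f : EuclideanSpace ℝ (Fin n) → ℝ) (hf : ContDiff ℝ (⊤ : ℕ∞) f) :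
    ∀ᵐ a : EuclideanSpace ℝ (Fin n) ∂volume,
      ∀ p : EuclideanSpace ℝ (Fin n),
        fderiv ℝ (fun x => f x - (inner ℝ a x : ℝ)) p = 0 →
        ∀ v : EuclideanSpace ℝ (Fin n),
          (∀ w : EuclideanSpace ℝ (Fin n),
            fderiv ℝ (fderiv ℝ (fun x => f x - (inner ℝ a x : ℝ))) p v w = 0) → v = 0 := by
  classical
  set φ : (EuclideanSpace ℝ (Fin n) →L[ℝ] ℝ) →L[ℝ] EuclideanSpace ℝ (Fin n) :=
    ((EuclideanSpace.equiv (Fin n) ℝ).symm : (Fin n → ℝ) →L[ℝ] EuclideanSpace ℝ (Fin n)).comp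
      (ContinuousLinearMap.pi
        (fun i => ContinuousLinearMap.apply ℝ ℝ (EuclideanSpace.single i 1))) with hφ
  have hφ_apply : ∀ (T : EuclideanSpace ℝ (Fin n) →L[ℝ] ℝ) (i : Fin n),
      φ T i = T (EuclideanSpace.single i 1) := fun T i => rfl
  have hφ_inj : Function.Injective φ := by
    intro T T' h
    have hb : ∀ i, T (EuclideanSpace.single i 1) = T' (EuclideanSpace.single i 1) := by
      intro i
      have := congrFun (congrArg (fun (z : EuclideanSpace ℝ (Fin n)) => (z : Fin n → ℝ)) h) i
      simpa [hφ_apply] using this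
    apply ContinuousLinearMap.coe_injective
    apply Module.Basis.ext (EuclideanSpace.basisFun (Fin n) ℝ).toBasis
    intro i
    simpa [OrthonormalBasis.coe_toBasis, EuclideanSpace.basisFun_apply] using hb i
  have hdiff : Differentiable ℝ f := hf.differentiable (by simp)
  have hdf : ContDiff ℝ (⊤ : ℕ∞) (fderiv ℝ f) := hf.fderiv_right (le_refl _)
  set g : EuclideanSpace ℝ (Fin n) → EuclideanSpace ℝ (Fin n) :=
    fun x => φ (fderiv ℝ f x) with hg
  set g' : EuclideanSpace ℝ (Fin n) → EuclideanSpace ℝ (Fin n) →L[ℝ] EuclideanSpace ℝ (Fin n) :=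
    fun x => φ.comp (fderiv ℝ (fderiv ℝ f) x) with hg'
  have hgd : ∀ x, HasFDerivAt g (g' x) x := fun x =>
    φ.hasFDerivAt.comp x ((hdf.differentiable (by simp) x).hasFDerivAt)
  set S : Set (EuclideanSpace ℝ (Fin n)) := {x | (g' x).det = 0} with hS
  have himg : volume (g '' S) = 0 :=
    addHaar_image_eq_zero_of_det_fderivWithin_eq_zero volume
      (fun x _ => (hgd x).hasFDerivWithinAt) (fun x hx => hx)
  have hae : ∀ᵐ a : EuclideanSpace ℝ (Fin n) ∂volume, a ∉ g '' S :=
    measure_eq_zero_iff_ae_notMem.1 himg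
  filter_upwards [hae] with a ha p hp v hv
  have hd1 : ∀ x : EuclideanSpace ℝ (Fin n),
      HasFDerivAt (fun x => f x - (inner ℝ a x : ℝ))
        (fderiv ℝ f x - innerSL ℝ a) x := fun x =>
    (hdiff x).hasFDerivAt.sub (innerSL ℝ a).hasFDerivAt
  have hfd1 : fderiv ℝ (fun x => f x - (inner ℝ a x : ℝ)) = fun x =>
      fderiv ℝ f x - innerSL ℝ a := funext fun x => (hd1 x).fderiv
  have hcrit : fderiv ℝ f p = innerSL ℝ a := by
    have h2 := hp
    rw [hfd1] at h2
    exact sub_eq_zero.1 h2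
  have hgp : g p = a := by
    have : g p = φ (innerSL ℝ a) := by rw [hg]; simp only [hcrit]
    rw [this]
    ext i
    rw [hφ_apply]
    simp [real_inner_comm, EuclideanSpace.inner_single_right]
  have hfd2 : fderiv ℝ (fderiv ℝ (fun x => f x - (inner ℝ a x : ℝ))) p
      = fderiv ℝ (fderiv ℝ f) p := by
    rw [hfd1]
    exact fderiv_sub_const _
  have hv' : fderiv ℝ (fderiv ℝ f) p v = 0 := by
    ext w
    have := hv w
    rw [hfd2] at this
    exact this
  have hgv : g' p v = 0 := by
    rw [hg']
    simp [hv']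
  by_cases hdet : (g' p).det = 0
  · exact absurd ⟨p, hdet, hgp⟩ ha
  · set e := LinearMap.equivOfDetNeZero ((g' p) : EuclideanSpace ℝ (Fin n) →ₗ[ℝ] EuclideanSpace ℝ (Fin n)) hdet with he
    have h1 : (e : EuclideanSpace ℝ (Fin n) →ₗ[ℝ] EuclideanSpace ℝ (Fin n))
        = ((g' p) : EuclideanSpace ℝ (Fin n) →ₗ[ℝ] EuclideanSpace ℝ (Fin n)) :=
      LinearEquiv.coe_ofIsUnitDet _
    have h2 : e v = e 0 := by
      calc e v = ((g' p : EuclideanSpace ℝ (Fin n) →ₗ[ℝ] EuclideanSpace ℝ (Fin n))) v := by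
            rw [← h1]; rfl
        _ = g' p v := rfl
        _ = 0 := hgv
        _ = e 0 := (map_zero e).symm
    exact e.injective h2
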